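/- Assume condition (Lip) holds and, for all compact sets T ⊂ ℝ₊ and K ⊂ ℝ^p, there exists b > 0 such that ‖D f(t,ξ)‖ ≤ b for all t ∈ T and all ξ ∈ K. If, for every compact set T ⊂ ℝ₊, there exist ρ > 0 and either b₁ < 1 such that ⟨D(d f_t)(ξ)ζ, ζ⟩ ≤ b₁‖ζ‖² for all ζ ∈ ℝ^p, all t ∈ T and all ξ ∈ (ℝ^p ∖ B(0,ρ)) ∖ N_{f_t}, or b₂ > 1 such that ⟨D(d f_t)(ξ)ζ, ζ⟩ ≥ b₂‖ζ‖² for all ζ ∈ ℝ^p, all t ∈ T and all ξ ∈ (ℝ^p ∖ B(0,ρ)) ∖ N_{f_t}, then F_t is radially unbounded, locally uniformly in t. -/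

import Mathlib

open MeasureTheory Filter Set
open scoped Topology RealInnerProductSpace ENNReal
open scoped NNReal

noncomputable section

abbrev Euc (k : ℕ) : Type := EuclideanSpace ℝ (Fin k)

/-- The interval `[t₀, τ)`, where `τ` is an extended real number. -/
def Ival (t₀ : ℝ) (τ : EReal) : Set ℝ := {t : ℝ | t₀ ≤ t ∧ (t : EReal) < τ}

/-- Membership in `L¹_loc(ℝ₊, ℝ₊)`. -/
def L1locNonneg (φ : ℝ → ℝ) : Prop :=
  (∀ t, 0 ≤ φ t) ∧ ∀ r : ℝ, IntegrableOn φ (Icc 0 r) volume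

/-- Membership in `L^∞_loc(ℝ₊, ℝ^k)`. -/
def LinftyLoc {k : ℕ} (v : ℝ → Euc k) : Prop :=
  AEStronglyMeasurable v volume ∧
    ∀ r : ℝ, ∃ c : ℝ, ∀ᵐ t ∂volume, t ∈ Icc (0 : ℝ) r → ‖v t‖ ≤ c

/-- Caratheodory function: `f(t, ·)` is continuous for every `t` and `f(·, ξ)` is
measurable for every `ξ`. -/
def Caratheodory {p m : ℕ} (f : ℝ → Euc p → Euc m) : Prop :=
  (∀ t, Continuous (f t)) ∧ ∀ ξ, Measurable fun t => f t ξ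

variable {n m me p : ℕ}

/-- `(v, x, y)` is a pre-trajectory of the Lur'e system `S^f` on `[t₀, τ)`:
`v ∈ L^∞_loc(ℝ₊)`, `x` is locally absolutely continuous on `[t₀, τ)` (expressed via the
integrated form of the differential equation), `y` and `f(·, y(·))` are locally
integrable on `[t₀, τ)`, and the state and output equations hold a.e. on `[t₀, τ)`. -/
structure IsPreTraj (A : Euc n →L[ℝ] Euc n) (B : Euc m →L[ℝ] Euc n)
    (Be : Euc me →L[ℝ] Euc n) (C : Euc n →L[ℝ] Euc p) (D : Euc m →L[ℝ] Euc p)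
    (De : Euc me →L[ℝ] Euc p) (f : ℝ → Euc p → Euc m)
    (v : ℝ → Euc me) (x : ℝ → Euc n) (y : ℝ → Euc p)
    (t₀ : ℝ) (τ : EReal) : Prop where
  ht₀ : 0 ≤ t₀
  hτ : (t₀ : EReal) < τ
  hv : LinftyLoc v
  hxc : ContinuousOn x (Ival t₀ τ)
  hy : ∀ t ∈ Ival t₀ τ, IntegrableOn y (Icc t₀ t) volume
  hfy : ∀ t ∈ Ival t₀ τ, IntegrableOn (fun s => f s (y s)) (Icc t₀ t) volume
  hode : ∀ t ∈ Ival t₀ τ,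
    x t = x t₀ + ∫ s in Icc t₀ t, (A (x s) + B (f s (y s)) + Be (v s))
  hout : ∀ᵐ t ∂volume, t ∈ Ival t₀ τ → y t = C (x t) + D (f t (y t)) + De (v t)

variable (A : Euc n →L[ℝ] Euc n) (B : Euc m →L[ℝ] Euc n) (Be : Euc me →L[ℝ] Euc n)
  (C : Euc n →L[ℝ] Euc p) (D : Euc m →L[ℝ] Euc p) (De : Euc me →L[ℝ] Euc p)
  (f : ℝ → Euc p → Euc m)

/-- A maximally defined pre-trajectory: a pre-trajectory on `[t₀, τ)` admitting no
proper extension to a pre-trajectory on a larger interval `[t₀, τ')`. -/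
def IsMaxPreTraj (v : ℝ → Euc me) (x : ℝ → Euc n) (y : ℝ → Euc p)
    (t₀ : ℝ) (τ : EReal) : Prop :=
  IsPreTraj A B Be C D De f v x y t₀ τ ∧
    ¬ ∃ (τ' : EReal) (x' : ℝ → Euc n) (y' : ℝ → Euc p), τ < τ' ∧
        IsPreTraj A B Be C D De f v x' y' t₀ τ' ∧
        (∀ t ∈ Ival t₀ τ, x' t = x t) ∧
        ∀ᵐ t ∂volume, t ∈ Ival t₀ τ → y' t = y t

/-- The map `F(t, ξ) = ξ − D f(t, ξ)`. -/
def Fmap (t : ℝ) (ξ : Euc p) : Euc p := ξ - D (f t ξ)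

/-- `F_t` is radially unbounded, locally uniformly in `t`. -/
def RadUnbddLocUnif : Prop :=
  ∀ ρ > (0 : ℝ), ∀ T : Set ℝ, T ⊆ Ici 0 → IsCompact T →
    ∃ σ ≥ (0 : ℝ), ∀ t ∈ T, ∀ ξ : Euc p, σ ≤ ‖ξ‖ → ρ ≤ ‖Fmap D f t ξ‖

/-- Condition (⋆): for every compact `K ⊆ ℝ^p` there is `φ ∈ L¹_loc(ℝ₊, ℝ₊)` with
`sup_{ξ ∈ K} ‖f(t, ξ)‖ ≤ φ(t)` for all `t ≥ 0`. -/
def CondStar : Prop :=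
  ∀ K : Set (Euc p), IsCompact K →
    ∃ φ : ℝ → ℝ, L1locNonneg φ ∧ ∀ t ≥ (0 : ℝ), ∀ ξ ∈ K, ‖f t ξ‖ ≤ φ t

/-- Condition (Lip): for every compact `K ⊆ ℝ^p` there is `λ ∈ L¹_loc(ℝ₊, ℝ₊)` with
`‖f(t, ξ) − f(t, ζ)‖ ≤ λ(t) ‖ξ − ζ‖` for all `ξ, ζ ∈ K` and all `t ≥ 0`. -/
def CondLip : Prop :=
  ∀ K : Set (Euc p), IsCompact K →
    ∃ lam : ℝ → ℝ, L1locNonneg lam ∧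
      ∀ t ≥ (0 : ℝ), ∀ ξ ∈ K, ∀ ζ ∈ K, ‖f t ξ - f t ζ‖ ≤ lam t * ‖ξ - ζ‖

/-- Forward completeness: every maximally defined pre-trajectory is defined on all
of `[t₀, ∞)`. -/
def ForwardComplete : Prop :=
  ∀ (v : ℝ → Euc me) (x : ℝ → Euc n) (y : ℝ → Euc p) (t₀ : ℝ) (τ : EReal),
    IsMaxPreTraj A B Be C D De f v x y t₀ τ → τ = ⊤

/-- The uniqueness property: two pre-trajectories with the same input and the same
initial state coincide on the smaller interval of definition. -/
def UniquenessProp : Prop :=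
  ∀ (v : ℝ → Euc me) (t₀ : ℝ) (τ τ' : EReal)
    (x x' : ℝ → Euc n) (y y' : ℝ → Euc p),
    IsPreTraj A B Be C D De f v x y t₀ τ →
    IsPreTraj A B Be C D De f v x' y' t₀ τ' →
    τ ≤ τ' → x t₀ = x' t₀ →
    (∀ t ∈ Ival t₀ τ, x t = x' t) ∧
      ∀ᵐ t ∂volume, t ∈ Ival t₀ τ → y t = y' t

/-- `im(C, D_e) = {C z + D_e w : z ∈ ℝⁿ, w ∈ ℝ^{m_e}}`. -/
def imCDe : Set (Euc p) := {ξ | ∃ (z : Euc n) (w : Euc me), ξ = C z + De w}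

/-- The fibre `F_t⁻¹(ξ) = {ζ : F_t(ζ) = ξ}`. -/
def Finv (t : ℝ) (ξ : Euc p) : Set (Euc p) := {ζ | Fmap D f t ζ = ξ}

/-- clamp to [0,1] -/
private def clamp (s : ℝ) : ℝ := min 1 (max 0 s)

private lemma clamp_lipschitz : LipschitzWith 1 clamp := by
  refine LipschitzWith.of_dist_le_mul fun a b => ?_
  simp only [clamp, Real.dist_eq, NNReal.coe_one, one_mul]
  calc |min 1 (max 0 a) - min 1 (max 0 b)| ≤ max |(1:ℝ) - 1| |max 0 a - max 0 b| :=
        abs_min_sub_min_le_max _ _ _ _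
    _ ≤ |a - b| := by
        rw [sub_self, abs_zero]
        refine max_le (abs_nonneg _) ?_
        calc |max 0 a - max 0 b| = |max a 0 - max b 0| := by rw [max_comm 0 a, max_comm 0 b]
          _ ≤ |a - b| := abs_max_sub_max_le_abs a b 0

private lemma clamp_mem (s : ℝ) : clamp s ∈ Icc (0:ℝ) 1 := by
  constructor
  · exact le_min zero_le_one (le_max_left _ _)
  · exact min_le_left _ _

private lemma clamp_eq_self {s : ℝ} (hs : s ∈ Icc (0:ℝ) 1) : clamp s = s := by
  simp only [clamp]
  rw [max_eq_right hs.1, min_eq_right hs.2]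

/-- derivative of a Lipschitz function is bounded -/
private lemma abs_le_of_hasDerivAt_lipschitz {ψ : ℝ → ℝ} {K : ℝ≥0} (hψ : LipschitzWith K ψ)
    {s d : ℝ} (h : HasDerivAt ψ d s) : |d| ≤ K := by
  rw [hasDerivAt_iff_tendsto_slope] at h
  have h' : Tendsto (fun z => |slope ψ s z|) (𝓝[≠] s) (𝓝 |d|) := h.abs
  refine le_of_tendsto h' ?_
  filter_upwards [self_mem_nhdsWithin] with z hz
  have hz' : z ≠ s := hz
  rw [slope_def_field, abs_div,
    div_le_iff₀ (abs_pos.2 (sub_ne_zero.2 hz'))]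
  have := hψ.dist_le_mul z s
  rwa [Real.dist_eq, Real.dist_eq] at this

/-- FTC-type inequality for Lipschitz functions with a.e. derivative bound. -/
private lemma lip_ftc {ψ d : ℝ → ℝ} {K : ℝ≥0} (hψ : LipschitzWith K ψ) (M : ℝ)
    (hmeas : AEStronglyMeasurable d (volume.restrict (Ioo (0:ℝ) 1)))
    (hd : ∀ᵐ s ∂(volume.restrict (Ioo (0:ℝ) 1)), HasDerivAt ψ (d s) s ∧ d s ≤ M) :
    ψ 1 - ψ 0 ≤ M := by
  set μ : Measure ℝ := volume.restrict (Ioo (0:ℝ) 1) with hμ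
  have hψc : Continuous ψ := hψ.continuous
  set h : ℕ → ℝ := fun n => 1 / (n + 1) with hh
  have hpos : ∀ n, 0 < h n := fun n => by positivity
  have hh0 : Tendsto h atTop (𝓝 0) := tendsto_one_div_add_atTop_nhds_zero_nat
  set F : ℕ → ℝ → ℝ := fun n s => (ψ (s + h n) - ψ s) / h n with hF
  -- Step A : dominated convergence
  have hdint : Integrable d μ := by
    refine Integrable.mono' (integrable_const (K : ℝ)) hmeas ?_
    filter_upwards [hd] with s hs
    rw [Real.norm_eq_abs]
    exact abs_le_of_hasDerivAt_lipschitz hψ hs.1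
  have hA : Tendsto (fun n => ∫ s, F n s ∂μ) atTop (𝓝 (∫ s, d s ∂μ)) := by
    refine tendsto_integral_of_dominated_convergence (fun _ => (K : ℝ))
      (fun n => ((hψc.comp (continuous_id.add continuous_const)).sub hψc).div_const _
        |>.aestronglyMeasurable) (integrable_const _) (fun n => ?_) ?_
    · refine Eventually.of_forall fun s => ?_
      rw [Real.norm_eq_abs, abs_div, abs_of_pos (hpos n),
        div_le_iff₀ (hpos n)]
      have := hψ.dist_le_mul (s + h n) s
      rw [Real.dist_eq, Real.dist_eq, add_sub_cancel_left, abs_of_pos (hpos n)] at this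
      exact this
    · filter_upwards [hd] with s hs
      rw [hasDerivAt_iff_tendsto_slope] at hs
      have h1 : Tendsto (fun n => s + h n) atTop (𝓝[≠] s) := by
        refine tendsto_nhdsWithin_of_tendsto_nhds_of_eventually_within _ ?_ ?_
        · simpa using (tendsto_const_nhds.add hh0)
        · exact Eventually.of_forall fun n => by
            simp only [mem_compl_iff, mem_singleton_iff]
            exact fun hc => (hpos n).ne' (by linarith [hc])
      have := hs.1.comp h1
      refine this.congr fun n => ?_
      simp only [Function.comp_apply, slope_def_field, hF, add_sub_cancel_left]
  -- Step B : the integrals converge to ψ 1 - ψ 0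
  have hiint : ∀ a b : ℝ, IntervalIntegrable ψ volume a b := fun a b =>
    hψc.intervalIntegrable a b
  have hB : Tendsto (fun n => ∫ s, F n s ∂μ) atTop (𝓝 (ψ 1 - ψ 0)) := by
    have key : ∀ n, ∫ s, F n s ∂μ =
        (∫ s in (1:ℝ)..(1 + h n), ψ s) / h n - (∫ s in (0:ℝ)..(h n), ψ s) / h n := by
      intro n
      have e0 : ∫ s, F n s ∂μ = (∫ s in (0:ℝ)..1, (ψ (s + h n) - ψ s)) / h n := by
        rw [hμ, ← MeasureTheory.integral_Ioc_eq_integral_Ioo,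
          ← intervalIntegral.integral_of_le zero_le_one, ← intervalIntegral.integral_div]
      have e1 : (∫ s in (0:ℝ)..1, ψ (s + h n)) = ∫ s in (h n)..(1 + h n), ψ s := by
        simpa [zero_add] using intervalIntegral.integral_comp_add_right ψ (h n)
      have e2 : (∫ s in (0:ℝ)..1, (ψ (s + h n) - ψ s))
          = (∫ s in (h n)..(1 + h n), ψ s) - ∫ s in (0:ℝ)..1, ψ s := by
        have hi2 : IntervalIntegrable (fun s => ψ (s + h n)) volume 0 1 :=
          (hψc.comp (continuous_id.add continuous_const)).intervalIntegrable _ _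
        rw [intervalIntegral.integral_sub hi2 (hiint _ _), e1]
      have adj1 : (∫ s in (0:ℝ)..(h n), ψ s) + (∫ s in (h n)..(1 + h n), ψ s)
          = ∫ s in (0:ℝ)..(1 + h n), ψ s := intervalIntegral.integral_add_adjacent_intervals
          (hiint _ _) (hiint _ _)
      have adj2 : (∫ s in (0:ℝ)..(1:ℝ), ψ s) + (∫ s in (1:ℝ)..(1 + h n), ψ s)
          = ∫ s in (0:ℝ)..(1 + h n), ψ s := intervalIntegral.integral_add_adjacent_intervals
          (hiint _ _) (hiint _ _)
      have : (∫ s in (h n)..(1 + h n), ψ s) - (∫ s in (0:ℝ)..(1:ℝ), ψ s)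
          = (∫ s in (1:ℝ)..(1 + h n), ψ s) - (∫ s in (0:ℝ)..(h n), ψ s) := by
        linarith [adj1, adj2]
      rw [e0, e2, this, sub_div]
    have lim1 : ∀ c : ℝ, Tendsto (fun n => (∫ s in c..(c + h n), ψ s) / h n) atTop (𝓝 (ψ c)) := by
      intro c
      have hb : ∀ n, |(∫ s in c..(c + h n), ψ s) / h n - ψ c| ≤ K * h n := by
        intro n
        have : (∫ s in c..(c + h n), ψ s) / h n - ψ c
            = (∫ s in c..(c + h n), (ψ s - ψ c)) / h n := by
          rw [intervalIntegral.integral_sub (hiint _ _) intervalIntegrable_const,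
            intervalIntegral.integral_const, add_sub_cancel_left, smul_eq_mul, sub_div,
            mul_div_cancel_left₀ _ (hpos n).ne']
        rw [this, abs_div, abs_of_pos (hpos n), div_le_iff₀ (hpos n)]
        have hnorm : ∀ x ∈ Set.uIoc c (c + h n), ‖ψ x - ψ c‖ ≤ K * h n := by
          intro x hx
          rw [Real.norm_eq_abs]
          have h1 := hψ.dist_le_mul x c
          rw [Real.dist_eq, Real.dist_eq] at h1
          have : |x - c| ≤ h n := by
            rw [Set.uIoc_of_le (by linarith [hpos n])] at hx
            rw [abs_le]
            constructor
            · linarith [hx.1, (hpos n).le]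
            · linarith [hx.2]
          refine h1.trans ?_
          exact mul_le_mul_of_nonneg_left this K.coe_nonneg

        have := intervalIntegral.norm_integral_le_of_norm_le_const hnorm
        rw [Real.norm_eq_abs, add_sub_cancel_left, abs_of_pos (hpos n)] at this
        calc |∫ s in c..(c + h n), (ψ s - ψ c)| ≤ (K * h n) * h n := this
          _ = K * h n * h n := rfl
      have : Tendsto (fun n => (K : ℝ) * h n) atTop (𝓝 0) := by
        have h2 := hh0.const_mul (K : ℝ)
        simp only [mul_zero] at h2
        exact h2
      refine tendsto_iff_dist_tendsto_zero.2 (squeeze_zero (fun n => dist_nonneg) (fun n => ?_) this)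
      rw [Real.dist_eq]; exact hb n
    have l0 := lim1 0
    simp only [zero_add] at l0
    exact (((lim1 1).sub l0).congr (fun n => (key n).symm))
  -- combine
  have heq : ψ 1 - ψ 0 = ∫ s, d s ∂μ := tendsto_nhds_unique hB hA
  rw [heq]
  calc ∫ s, d s ∂μ ≤ ∫ _, M ∂μ := by
        refine integral_mono_ae hdint (integrable_const _) ?_
        filter_upwards [hd] with s hs using hs.2
    _ = M * (volume (Ioo (0:ℝ) 1)).toReal := by
        rw [hμ, integral_const, measureReal_restrict_apply_univ, measureReal_def, smul_eq_mul, mul_comm]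
    _ = M := by rw [Real.volume_Ioo]; norm_num


private lemma ae_ae_line {p : ℕ} (u : Euc p) {N : Set (Euc p)} (hN : MeasurableSet N)
    (h0 : volume N = 0) : ∀ᵐ x : Euc p, ∀ᵐ s : ℝ, x + s • u ∉ N := by
  have hcont : Continuous (fun q : Euc p × ℝ => q.1 + q.2 • u) :=
    continuous_fst.add (continuous_snd.smul continuous_const)
  set S : Set (Euc p × ℝ) := (fun q : Euc p × ℝ => q.1 + q.2 • u) ⁻¹' N with hS
  have hSm : MeasurableSet S := hcont.measurable hN
  have hnull : (volume.prod volume) S = 0 := by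
    rw [Measure.prod_apply_symm hSm]
    have : ∀ s : ℝ, volume ((fun x : Euc p => (x, s)) ⁻¹' S) = 0 := by
      intro s
      have : (fun x : Euc p => (x, s)) ⁻¹' S = (fun x : Euc p => x + s • u) ⁻¹' N := rfl
      rw [this, measure_preimage_add_right volume (s • u) N]
      exact h0
    simp only [this, lintegral_zero]
  have := MeasureTheory.Measure.measure_prod_null (μ := (volume : Measure (Euc p)))
    (ν := (volume : Measure ℝ)) hSm |>.1 hnull
  filter_upwards [this] with x hx
  rw [Pi.zero_apply] at hx
  rw [ae_iff]
  convert hx using 2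
  ext a
  simp [hS, Set.mem_preimage]

private lemma cont_le_of_ae_le {p : ℕ} {Φ : Euc p → ℝ} (hc : Continuous Φ) {ζ : Euc p}
    {ε M : ℝ} (hε : 0 < ε) (h : ∀ᵐ x : Euc p, x ∈ Metric.ball ζ ε → Φ x ≤ M) : Φ ζ ≤ M := by
  by_contra hlt
  push_neg at hlt
  set U : Set (Euc p) := Metric.ball ζ ε ∩ Φ ⁻¹' (Set.Ioi M) with hU
  have hUopen : IsOpen U := Metric.isOpen_ball.inter (isOpen_Ioi.preimage hc)
  have hUne : U.Nonempty := ⟨ζ, Metric.mem_ball_self hε, hlt⟩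
  have hpos := hUopen.measure_pos volume hUne
  have : volume U = 0 := by
    rw [ae_iff] at h
    refine measure_mono_null ?_ h
    intro x hx
    simp only [mem_setOf_eq, not_forall]
    exact ⟨hx.1, by exact not_le.2 hx.2⟩
  exact absurd this hpos.ne'

private lemma seg {p m : ℕ} (D : Euc m →L[ℝ] Euc p) (g : Euc p → Euc m)
    {R : ℝ} {K : ℝ≥0} (hg : LipschitzOnWith K g (Metric.closedBall (0 : Euc p) R))
    (hgc : Continuous g) (ζ u : Euc p) (M : ℝ)
    (hR : ∀ s ∈ Icc (0:ℝ) 1, ‖ζ + s • u‖ + 1 < R)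
    (hquad : ∀ x : Euc p, (∃ s ∈ Icc (0:ℝ) 1, x ∈ Metric.ball (ζ + s • u) 1) →
      DifferentiableAt ℝ g x → ⟪u, D ((fderiv ℝ g x) u)⟫ ≤ M) :
    ⟪u, D (g (ζ + u)) - D (g ζ)⟫ ≤ M := by
  classical
  set clm : Euc m →L[ℝ] ℝ := (innerSL ℝ u).comp D with hclm
  have hclm_apply : ∀ w, clm w = ⟪u, D w⟫ := fun w => rfl
  set Φ : Euc p → ℝ := fun x => clm (g (x + u)) - clm (g x) with hΦ
  have hΦc : Continuous Φ :=
    ((clm.continuous.comp (hgc.comp (continuous_id.add continuous_const))).sub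
      (clm.continuous.comp hgc))
  -- the bad set
  set N : Set (Euc p) := Metric.ball (0 : Euc p) R \ {x | DifferentiableAt ℝ g x} with hN
  have hNm : MeasurableSet N :=
    measurableSet_ball.diff (measurableSet_of_differentiableAt ℝ g)
  have hN0 : volume N = 0 := by
    have h1 : ∀ᵐ x : Euc p, x ∉ N := by
      filter_upwards [hg.ae_differentiableWithinAt_of_mem] with x hx hxN
      obtain ⟨hx1, hx2⟩ := hxN
      have h3 : Metric.closedBall (0 : Euc p) R ∈ 𝓝 x :=
        Filter.mem_of_superset (Metric.isOpen_ball.mem_nhds hx1) Metric.ball_subset_closedBall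
      exact hx2 ((hx (Metric.ball_subset_closedBall hx1)).differentiableAt h3)
    rw [ae_iff] at h1
    simpa only [not_not, Set.setOf_mem_eq] using h1
  -- main ae claim on the ball
  have main : ∀ᵐ x : Euc p, x ∈ Metric.ball ζ 1 → Φ x ≤ M := by
    filter_upwards [ae_ae_line u hNm hN0] with x hline hxball
    have hxζ : ‖x - ζ‖ < 1 := by rwa [← dist_eq_norm, ← Metric.mem_ball]
    -- norms along the (clamped) line
    have hnorm : ∀ c ∈ Icc (0:ℝ) 1, ‖x + c • u‖ < R := by
      intro c hc
      have h1 : ‖x + c • u‖ ≤ ‖ζ + c • u‖ + ‖x - ζ‖ := by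
        have : x + c • u = (ζ + c • u) + (x - ζ) := by abel
        rw [this]
        exact norm_add_le _ _
      calc ‖x + c • u‖ ≤ ‖ζ + c • u‖ + ‖x - ζ‖ := h1
        _ < ‖ζ + c • u‖ + 1 := by linarith
        _ < R := hR c hc
    -- the 1-D function
    set ψ : ℝ → ℝ := fun s => clm (g (x + clamp s • u)) with hψdef
    set d : ℝ → ℝ := fun s => ⟪u, D ((fderiv ℝ g (x + s • u)) u)⟫ with hd_def
    -- Lipschitz
    have hlc : LipschitzWith (K * ‖clm‖₊ * ‖u‖₊) ψ := by
      have l1 : LipschitzWith ‖u‖₊ (fun c : ℝ => x + c • u) := by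
        refine LipschitzWith.of_dist_le_mul fun a b => ?_
        rw [dist_eq_norm, dist_eq_norm]
        have : (x + a • u) - (x + b • u) = (a - b) • u := by
          rw [sub_smul]; abel
        rw [this, norm_smul]
        rw [coe_nnnorm, Real.norm_eq_abs]
        exact le_of_eq (mul_comm _ _)
      have l2 : LipschitzWith ‖u‖₊ (fun s : ℝ => x + clamp s • u) := by
        have := l1.comp clamp_lipschitz
        rw [mul_one] at this
        exact this
      have hmapsTo : Set.MapsTo (fun s : ℝ => x + clamp s • u) Set.univ
          (Metric.closedBall (0 : Euc p) R) := by
        intro s _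
        rw [Metric.mem_closedBall, dist_zero_right]
        exact (hnorm (clamp s) (clamp_mem s)).le
      have l3 : LipschitzOnWith (K * ‖u‖₊) (g ∘ fun s : ℝ => x + clamp s • u) Set.univ :=
        hg.comp l2.lipschitzOnWith hmapsTo
      rw [lipschitzOnWith_univ] at l3
      have := clm.lipschitz.comp l3
      rw [hψdef]
      have heq : (⇑clm ∘ g ∘ fun s : ℝ => x + clamp s • u)
          = fun s => clm (g (x + clamp s • u)) := rfl
      rw [← heq]
      rw [show K * ‖clm‖₊ * ‖u‖₊ = ‖clm‖₊ * (K * ‖u‖₊) by ring]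
      exact this
    -- derivative a.e.
    have hder : ∀ᵐ s ∂(volume.restrict (Ioo (0:ℝ) 1)), HasDerivAt ψ (d s) s ∧ d s ≤ M := by
      filter_upwards [ae_restrict_of_ae hline, ae_restrict_mem measurableSet_Ioo] with s hs hsIoo
      have hsIcc : s ∈ Icc (0:ℝ) 1 := ⟨hsIoo.1.le, hsIoo.2.le⟩
      have hball : x + s • u ∈ Metric.ball (0 : Euc p) R := by
        rw [Metric.mem_ball, dist_zero_right]
        exact hnorm s hsIcc
      have hdiff : DifferentiableAt ℝ g (x + s • u) := by
        by_contra hnd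
        exact hs ⟨hball, hnd⟩
      have hmem : ∃ c ∈ Icc (0:ℝ) 1, x + s • u ∈ Metric.ball (ζ + c • u) 1 := by
        refine ⟨s, hsIcc, ?_⟩
        rw [Metric.mem_ball, dist_eq_norm]
        have : (x + s • u) - (ζ + s • u) = x - ζ := by abel
        rwa [this]
      refine ⟨?_, hquad _ hmem hdiff⟩
      -- HasDerivAt
      have hline' : HasDerivAt (fun s' : ℝ => x + s' • u) u s := by
        have h1 : HasDerivAt (fun s' : ℝ => s' • u) ((1:ℝ) • u) s :=
          (hasDerivAt_id s).smul_const u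
        rw [one_smul] at h1
        exact h1.const_add x
      have h2 : HasDerivAt (fun s' : ℝ => g (x + s' • u)) ((fderiv ℝ g (x + s • u)) u) s :=
        (hdiff.hasFDerivAt.comp_hasDerivAt s hline')
      have h3 : HasDerivAt (fun s' : ℝ => clm (g (x + s' • u)))
          (clm ((fderiv ℝ g (x + s • u)) u)) s :=
        (clm.hasFDerivAt.comp_hasDerivAt s h2)
      have heq : ψ =ᶠ[𝓝 s] (fun s' : ℝ => clm (g (x + s' • u))) := by
        filter_upwards [Ioo_mem_nhds hsIoo.1 hsIoo.2] with s' hs'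
        rw [hψdef]
        simp only [clamp_eq_self ⟨hs'.1.le, hs'.2.le⟩]
      exact (h3.congr_of_eventuallyEq heq)
    -- measurability of d
    have hmeas : AEStronglyMeasurable d (volume.restrict (Ioo (0:ℝ) 1)) := by
      have m1 : Measurable (fun s : ℝ => x + s • u) :=
        (continuous_const.add (continuous_id.smul continuous_const)).measurable
      have m2 : Measurable (fderiv ℝ g) := measurable_fderiv ℝ g
      have m3 : Continuous (fun w : Euc p →L[ℝ] Euc m => clm (w u)) :=
        clm.continuous.comp (ContinuousLinearMap.apply ℝ (Euc m) u).continuous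
      exact ((m3.measurable.comp (m2.comp m1)).aestronglyMeasurable).restrict
    have := lip_ftc hlc M hmeas hder
    have hψ1 : ψ 1 = clm (g (x + u)) := by
      rw [hψdef]; simp only [clamp_eq_self (right_mem_Icc.2 zero_le_one), one_smul]
    have hψ0 : ψ 0 = clm (g x) := by
      rw [hψdef]; simp only [clamp_eq_self (left_mem_Icc.2 zero_le_one), zero_smul, add_zero]
    rw [hψ1, hψ0] at this
    exact this
  have := cont_le_of_ae_le hΦc one_pos main
  rw [hΦ] at this
  simp only at this
  rw [inner_sub_right]
  exact this

private lemma norm_scaled {p : ℕ} (ξ : Euc p) {ρ₁ : ℝ} (h0 : 0 < ρ₁) (h : ρ₁ ≤ ‖ξ‖) :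
    ‖(ρ₁ / ‖ξ‖) • ξ‖ = ρ₁ ∧ ‖ξ - (ρ₁ / ‖ξ‖) • ξ‖ = ‖ξ‖ - ρ₁ := by
  have hn : 0 < ‖ξ‖ := lt_of_lt_of_le h0 h
  constructor
  · rw [norm_smul, Real.norm_eq_abs, abs_of_pos (by positivity)]
    field_simp
  · have : ξ - (ρ₁ / ‖ξ‖) • ξ = (1 - ρ₁ / ‖ξ‖) • ξ := by module
    rw [this, norm_smul, Real.norm_eq_abs, abs_of_nonneg (by
      rw [sub_nonneg, div_le_one hn]; exact h)]
    field_simp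

private lemma seg_norm {p : ℕ} (ξ : Euc p) {ρ₁ : ℝ} (h0 : 0 < ρ₁) (h : ρ₁ ≤ ‖ξ‖) {s : ℝ}
    (hs : s ∈ Icc (0:ℝ) 1) :
    ρ₁ ≤ ‖(ρ₁ / ‖ξ‖) • ξ + s • (ξ - (ρ₁ / ‖ξ‖) • ξ)‖ ∧
      ‖(ρ₁ / ‖ξ‖) • ξ + s • (ξ - (ρ₁ / ‖ξ‖) • ξ)‖ ≤ ‖ξ‖ := by
  have hn : 0 < ‖ξ‖ := lt_of_lt_of_le h0 h
  have hcoef : (ρ₁ / ‖ξ‖) • ξ + s • (ξ - (ρ₁ / ‖ξ‖) • ξ)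
      = (ρ₁ / ‖ξ‖ + s * (1 - ρ₁ / ‖ξ‖)) • ξ := by module
  have ha : 0 ≤ ρ₁ / ‖ξ‖ + s * (1 - ρ₁ / ‖ξ‖) := by
    have h1 : 0 ≤ ρ₁ / ‖ξ‖ := by positivity
    have h2 : 0 ≤ 1 - ρ₁ / ‖ξ‖ := by rw [sub_nonneg, div_le_one hn]; exact h
    nlinarith [hs.1]
  have hval : ‖(ρ₁ / ‖ξ‖) • ξ + s • (ξ - (ρ₁ / ‖ξ‖) • ξ)‖
      = ρ₁ + s * (‖ξ‖ - ρ₁) := by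
    rw [hcoef, norm_smul, Real.norm_eq_abs, abs_of_nonneg ha]
    field_simp
  rw [hval]
  constructor
  · nlinarith [hs.1, hs.2]
  · nlinarith [hs.1, hs.2]

/-- If condition (Lip) holds, `‖D f(t, ξ)‖` is bounded on all compact sets `T × K`, and
on every compact time set `T` there is `ρ > 0` such that either
`⟨D (d f_t)(ξ) ζ, ζ⟩ ≤ b₁ ‖ζ‖²` with `b₁ < 1`, or `⟨D (d f_t)(ξ) ζ, ζ⟩ ≥ b₂ ‖ζ‖²` with
`b₂ > 1`, for all `ζ`, all `t ∈ T` and all points `ξ` of differentiability of `f_t`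
outside `B(0, ρ)`, then `F_t` is radially unbounded, locally uniformly in `t`. -/
theorem radUnbdd_of_derivative_dichotomy
    (hf : Caratheodory f)
    (hlip : CondLip f)
    (hbdd : ∀ T : Set ℝ, T ⊆ Ici 0 → IsCompact T → ∀ K : Set (Euc p), IsCompact K →
      ∃ b : ℝ, ∀ t ∈ T, ∀ ξ ∈ K, ‖D (f t ξ)‖ ≤ b)
    (hdichot : ∀ T : Set ℝ, T ⊆ Ici 0 → IsCompact T →
      ∃ ρ > (0 : ℝ),
        (∃ b₁ < (1 : ℝ), ∀ t ∈ T, ∀ ξ : Euc p,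
          ξ ∉ Metric.ball (0 : Euc p) ρ → DifferentiableAt ℝ (f t) ξ →
          ∀ ζ : Euc p, ⟪D ((fderiv ℝ (f t) ξ) ζ), ζ⟫ ≤ b₁ * ‖ζ‖ ^ 2) ∨
        (∃ b₂ > (1 : ℝ), ∀ t ∈ T, ∀ ξ : Euc p,
          ξ ∉ Metric.ball (0 : Euc p) ρ → DifferentiableAt ℝ (f t) ξ →
          ∀ ζ : Euc p, b₂ * ‖ζ‖ ^ 2 ≤ ⟪D ((fderiv ℝ (f t) ξ) ζ), ζ⟫)) :
    RadUnbddLocUnif D f := by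
  intro ρ hρ T hT hTc
  obtain ⟨ρ₀, hρ₀pos, hcase⟩ := hdichot T hT hTc
  set ρ₁ : ℝ := ρ₀ + 1 with hρ₁def
  have hρ₁pos : (0:ℝ) < ρ₁ := by linarith
  obtain ⟨bT, hbT⟩ := hbdd T hT hTc (Metric.closedBall 0 ρ₁) (isCompact_closedBall _ _)
  -- generic application of the segment lemma
  have segApp : ∀ t ∈ T, ∀ ξ : Euc p, ρ₁ ≤ ‖ξ‖ → ∀ (D' : Euc m →L[ℝ] Euc p) (M : ℝ),
      (∀ x : Euc p, x ∉ Metric.ball (0 : Euc p) ρ₀ → DifferentiableAt ℝ (f t) x →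
        ⟪ξ - (ρ₁ / ‖ξ‖) • ξ, D' ((fderiv ℝ (f t) x) (ξ - (ρ₁ / ‖ξ‖) • ξ))⟫ ≤ M) →
      ⟪ξ - (ρ₁ / ‖ξ‖) • ξ, D' (f t ξ) - D' (f t ((ρ₁ / ‖ξ‖) • ξ))⟫ ≤ M := by
    intro t ht ξ hξ D' M hq
    have htnn : (0:ℝ) ≤ t := hT ht
    set ζ : Euc p := (ρ₁ / ‖ξ‖) • ξ with hζdef
    set u : Euc p := ξ - ζ with hudef
    set R : ℝ := ‖ξ‖ + 2 with hRdef
    obtain ⟨lam, hlam1, hlam2⟩ := hlip (Metric.closedBall 0 R) (isCompact_closedBall _ _)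
    have hlipt : LipschitzOnWith (Real.toNNReal (lam t)) (f t)
        (Metric.closedBall (0 : Euc p) R) := by
      rw [lipschitzOnWith_iff_dist_le_mul]
      intro a ha b hb
      rw [dist_eq_norm, dist_eq_norm, Real.coe_toNNReal _ (hlam1.1 t)]
      exact hlam2 t htnn a ha b hb
    have hRseg : ∀ s ∈ Icc (0:ℝ) 1, ‖ζ + s • u‖ + 1 < R := by
      intro s hs
      have h2 := (seg_norm ξ hρ₁pos hξ hs).2
      rw [hRdef]
      linarith
    have hquad : ∀ x : Euc p, (∃ s ∈ Icc (0:ℝ) 1, x ∈ Metric.ball (ζ + s • u) 1) →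
        DifferentiableAt ℝ (f t) x → ⟪u, D' ((fderiv ℝ (f t) x) u)⟫ ≤ M := by
      rintro x ⟨s, hs, hxball⟩ hdiff
      refine hq x ?_ hdiff
      rw [Metric.mem_ball, dist_zero_right, not_lt]
      have h1 := (seg_norm ξ hρ₁pos hξ hs).1
      have h2 : ‖x - (ζ + s • u)‖ < 1 := by
        rwa [← dist_eq_norm, ← Metric.mem_ball]
      have h3 : ‖ζ + s • u‖ - ‖x‖ ≤ ‖(ζ + s • u) - x‖ := norm_sub_norm_le _ _
      rw [norm_sub_rev] at h3
      rw [hρ₁def] at h1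
      linarith
    have hseg := seg D' (f t) hlipt (hf.1 t) ζ u M hRseg hquad
    have hζu : ζ + u = ξ := by rw [hudef]; abel
    rwa [hζu] at hseg
  -- the key quantitative estimate
  obtain ⟨c, hcpos, hkey⟩ : ∃ c > (0:ℝ), ∀ t ∈ T, ∀ ξ : Euc p, ρ₁ ≤ ‖ξ‖ →
      c * (‖ξ‖ - ρ₁) ≤ ‖Fmap D f t ξ - Fmap D f t ((ρ₁ / ‖ξ‖) • ξ)‖ := by
    rcases hcase with ⟨b₁, hb₁, H⟩ | ⟨b₂, hb₂, H⟩
    · refine ⟨1 - b₁, by linarith, ?_⟩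
      intro t ht ξ hξ
      set ζ : Euc p := (ρ₁ / ‖ξ‖) • ξ with hζdef
      set u : Euc p := ξ - ζ with hudef
      have hu : ‖u‖ = ‖ξ‖ - ρ₁ := (norm_scaled ξ hρ₁pos hξ).2
      have hseg : ⟪u, D (f t ξ) - D (f t ζ)⟫ ≤ b₁ * ‖u‖ ^ 2 := by
        refine segApp t ht ξ hξ D (b₁ * ‖u‖ ^ 2) ?_
        intro x hx hdiff
        have := H t ht x hx hdiff u
        rwa [real_inner_comm] at this
      have hF : Fmap D f t ξ - Fmap D f t ζ = u - (D (f t ξ) - D (f t ζ)) := by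
        simp only [Fmap, hudef]
        abel
      have hinner : (1 - b₁) * ‖u‖ ^ 2 ≤ ⟪u, Fmap D f t ξ - Fmap D f t ζ⟫ := by
        rw [hF, inner_sub_right, real_inner_self_eq_norm_sq]
        linarith
      have hCS : ⟪u, Fmap D f t ξ - Fmap D f t ζ⟫ ≤ ‖u‖ * ‖Fmap D f t ξ - Fmap D f t ζ‖ :=
        real_inner_le_norm u _
      rw [← hu]
      rcases eq_or_lt_of_le (norm_nonneg u) with h0 | h0
      · rw [← h0, mul_zero]
        exact norm_nonneg _
      · nlinarith
    · refine ⟨b₂ - 1, by linarith, ?_⟩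
      intro t ht ξ hξ
      set ζ : Euc p := (ρ₁ / ‖ξ‖) • ξ with hζdef
      set u : Euc p := ξ - ζ with hudef
      have hu : ‖u‖ = ‖ξ‖ - ρ₁ := (norm_scaled ξ hρ₁pos hξ).2
      have hseg : ⟪u, (-D) (f t ξ) - (-D) (f t ζ)⟫ ≤ -(b₂ * ‖u‖ ^ 2) := by
        refine segApp t ht ξ hξ (-D) (-(b₂ * ‖u‖ ^ 2)) ?_
        intro x hx hdiff
        have := H t ht x hx hdiff u
        rw [real_inner_comm] at this
        rw [ContinuousLinearMap.neg_apply, inner_neg_right]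
        linarith
      have hseg' : b₂ * ‖u‖ ^ 2 ≤ ⟪u, D (f t ξ) - D (f t ζ)⟫ := by
        rw [ContinuousLinearMap.neg_apply, ContinuousLinearMap.neg_apply] at hseg
        have : (-(D (f t ξ)) - -(D (f t ζ))) = -(D (f t ξ) - D (f t ζ)) := by abel
        rw [this, inner_neg_right] at hseg
        linarith
      have hF : Fmap D f t ζ - Fmap D f t ξ = (D (f t ξ) - D (f t ζ)) - u := by
        simp only [Fmap, hudef]
        abel
      have hinner : (b₂ - 1) * ‖u‖ ^ 2 ≤ ⟪u, Fmap D f t ζ - Fmap D f t ξ⟫ := by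
        rw [hF, inner_sub_right, real_inner_self_eq_norm_sq]
        linarith
      have hCS : ⟪u, Fmap D f t ζ - Fmap D f t ξ⟫ ≤ ‖u‖ * ‖Fmap D f t ζ - Fmap D f t ξ‖ :=
        real_inner_le_norm u _
      rw [← hu]
      rcases eq_or_lt_of_le (norm_nonneg u) with h0 | h0
      · rw [← h0, mul_zero]
        exact norm_nonneg _
      · have h5 : (b₂ - 1) * ‖u‖ * ‖u‖ ≤ ‖Fmap D f t ξ - Fmap D f t ζ‖ * ‖u‖ := by
          calc (b₂ - 1) * ‖u‖ * ‖u‖ = (b₂ - 1) * ‖u‖ ^ 2 := by ring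
            _ ≤ ⟪u, Fmap D f t ζ - Fmap D f t ξ⟫ := hinner
            _ ≤ ‖u‖ * ‖Fmap D f t ζ - Fmap D f t ξ‖ := hCS
            _ = ‖Fmap D f t ξ - Fmap D f t ζ‖ * ‖u‖ := by
                rw [norm_sub_rev (Fmap D f t ζ)]
                exact mul_comm _ _
        exact le_of_mul_le_mul_right h5 h0
  -- choose σ and conclude
  refine ⟨ρ₁ + (ρ + ρ₁ + max bT 0 + 1) / c, ?_, ?_⟩
  · have h1 : 0 < (ρ + ρ₁ + max bT 0 + 1) / c := by
      have : (0:ℝ) < ρ + ρ₁ + max bT 0 + 1 := by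
        have := le_max_right bT (0:ℝ)
        linarith
      positivity
    linarith
  intro t ht ξ hσξ
  have hq : 0 < (ρ + ρ₁ + max bT 0 + 1) / c := by
    have : (0:ℝ) < ρ + ρ₁ + max bT 0 + 1 := by
      have := le_max_right bT (0:ℝ)
      linarith
    positivity
  have hξ : ρ₁ ≤ ‖ξ‖ := by linarith
  set ζ : Euc p := (ρ₁ / ‖ξ‖) • ξ with hζdef
  have hζnorm : ‖ζ‖ = ρ₁ := (norm_scaled ξ hρ₁pos hξ).1
  have hFζ : ‖Fmap D f t ζ‖ ≤ ρ₁ + max bT 0 := by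
    have h1 : ‖Fmap D f t ζ‖ ≤ ‖ζ‖ + ‖D (f t ζ)‖ := by
      simp only [Fmap]
      exact norm_sub_le _ _
    have h2 : ‖D (f t ζ)‖ ≤ bT := by
      refine hbT t ht ζ ?_
      rw [Metric.mem_closedBall, dist_zero_right, hζnorm]
    have h3 : bT ≤ max bT 0 := le_max_left _ _
    rw [hζnorm] at h1
    linarith
  have h1 := hkey t ht ξ hξ
  rw [← hζdef] at h1
  have h2 : ‖Fmap D f t ξ - Fmap D f t ζ‖ ≤ ‖Fmap D f t ξ‖ + ‖Fmap D f t ζ‖ := norm_sub_le _ _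
  have h3 : ρ + ρ₁ + max bT 0 + 1 ≤ c * (‖ξ‖ - ρ₁) := by
    have h4 : (ρ + ρ₁ + max bT 0 + 1) / c ≤ ‖ξ‖ - ρ₁ := by linarith
    rw [div_le_iff₀ hcpos] at h4
    linarith [h4]
  linarith
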